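/- Let T be a positive self-adjoint bounded operator on a Hilbert space and P an orthogonal projection such that I − P ≼ λ(W*W + λI)^{-1} for some bounded operator W with T₁ := T, and suppose ‖(T+λI)^{-1/2}(T − W*W)(T+λI)^{-1/2}‖ ≤ c < 1. Then ‖(I − P) T^{1/2}‖² ≤ (1−c)^{-1} λ. -/

import Mathlib

set_option maxHeartbeats 1000000

open ContinuousLinearMap in
/-- Let `T` be a positive self-adjoint bounded operator, `P` an orthogonal projection and `W`
a bounded operator such that `I − P ≼ λ (W*W + λI)⁻¹`, and suppose
`‖(T+λI)^(-1/2) (T − W*W) (T+λI)^(-1/2)‖ ≤ c < 1`. Then `‖(I − P) T^(1/2)‖² ≤ (1−c)⁻¹ λ`. -/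
theorem proj_error_neumann_bound {H K : Type*}
    [NormedAddCommGroup H] [InnerProductSpace ℂ H] [CompleteSpace H]
    [TopologicalSpace.SeparableSpace H]
    [NormedAddCommGroup K] [InnerProductSpace ℂ K] [CompleteSpace K]
    (T P : H →L[ℂ] H) (W : H →L[ℂ] K)
    (hT : T.IsPositive) (hP : IsIdempotentElem P) (hPsa : IsSelfAdjoint P)
    (l : ℝ) (hl : 0 < l) (c : ℝ) (hc : c < 1)
    (hproj : ((l : ℂ) • Ring.inverse ((adjoint W).comp W + (l : ℂ) • (1 : H →L[ℂ] H))
        - (1 - P)).IsPositive)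
    (hnorm : ‖cfc (fun u : ℝ => (Real.sqrt (u + l))⁻¹) T
        * (T - (adjoint W).comp W)
        * cfc (fun u : ℝ => (Real.sqrt (u + l))⁻¹) T‖ ≤ c) :
    ‖(1 - P) * cfc (fun u : ℝ => Real.sqrt u) T‖ ^ 2 ≤ (1 - c)⁻¹ * l := by
  have h0 : (0 : H →L[ℂ] H) ≤ T := (nonneg_iff_isPositive T).mpr hT
  have hTsa : IsSelfAdjoint T := hT.isSelfAdjoint
  set WW : H →L[ℂ] H := (adjoint W).comp W with hWWdef
  have hWW0 : (0 : H →L[ℂ] H) ≤ WW := by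
    rw [nonneg_iff_isPositive]
    have := isPositive_one.adjoint_conj W
    rwa [ContinuousLinearMap.one_def, ContinuousLinearMap.id_comp] at this
  have hWWsa : IsSelfAdjoint WW := ((nonneg_iff_isPositive WW).mp hWW0).isSelfAdjoint
  have hspec : ∀ x ∈ spectrum ℝ T, 0 ≤ x := fun x hx => spectrum_nonneg_of_nonneg h0 hx
  have hWWspec : ∀ x ∈ spectrum ℝ WW, 0 ≤ x := fun x hx => spectrum_nonneg_of_nonneg hWW0 hx
  have hne : ∀ x ∈ spectrum ℝ T, Real.sqrt (x + l) ≠ 0 := fun x hx =>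
    ne_of_gt (Real.sqrt_pos.mpr (by have := hspec x hx; linarith))
  -- operators via cfc
  set S := cfc (fun u : ℝ => Real.sqrt u) T with hSdef
  set R := cfc (fun u : ℝ => (Real.sqrt (u + l))⁻¹) T with hRdef
  set Q := cfc (fun u : ℝ => Real.sqrt (u + l)) T with hQdef
  set Cc := cfc (fun u : ℝ => Real.sqrt u * (Real.sqrt (u + l))⁻¹) T with hCdef
  have hcontQ : ContinuousOn (fun u : ℝ => Real.sqrt (u + l)) (spectrum ℝ T) := by fun_prop
  have hcontR : ContinuousOn (fun u : ℝ => (Real.sqrt (u + l))⁻¹) (spectrum ℝ T) :=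
    ContinuousOn.inv₀ (by fun_prop) hne
  have hcontS : ContinuousOn (fun u : ℝ => Real.sqrt u) (spectrum ℝ T) := by fun_prop
  have hcontC : ContinuousOn (fun u : ℝ => Real.sqrt u * (Real.sqrt (u + l))⁻¹)
      (spectrum ℝ T) := hcontS.mul hcontR
  have hQR : Q * R = 1 := by
    rw [hQdef, hRdef, ← cfc_mul _ _ T hcontQ hcontR, ← cfc_one ℝ T]
    exact cfc_congr fun x hx => by simp only [Pi.one_apply]; field_simp [hne x hx]
  have hRQ : R * Q = 1 := by
    rw [hQdef, hRdef, ← cfc_mul _ _ T hcontR hcontQ, ← cfc_one ℝ T]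
    exact cfc_congr fun x hx => by simp only [Pi.one_apply]; field_simp [hne x hx]
  have hQC : Q * Cc = S := by
    rw [hQdef, hCdef, hSdef, ← cfc_mul _ _ T hcontQ hcontC]
    exact cfc_congr fun x hx => by field_simp [hne x hx]
  have hCQ : Cc * Q = S := by
    rw [hQdef, hCdef, hSdef, ← cfc_mul _ _ T hcontC hcontQ]
    exact cfc_congr fun x hx => by field_simp [hne x hx]
  have hQQ : Q * Q = T + l • 1 := by
    rw [hQdef, ← cfc_mul _ _ T hcontQ hcontQ]
    have : cfc (fun u : ℝ => Real.sqrt (u + l) * Real.sqrt (u + l)) T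
        = cfc (fun u : ℝ => u + l) T := cfc_congr fun x hx => by
      rw [Real.mul_self_sqrt (by have := hspec x hx; linarith)]
    rw [this, cfc_add_const l (fun u : ℝ => u) T (by fun_prop) hTsa, cfc_id' ℝ T,
      Algebra.algebraMap_eq_smul_one]
  have hCnorm : ‖Cc‖ ≤ 1 := by
    rw [hCdef]
    apply norm_cfc_le zero_le_one
    intro x hx
    have hx0 := hspec x hx
    rw [Real.norm_eq_abs, abs_of_nonneg (by positivity)]
    rw [mul_inv_le_iff₀ (Real.sqrt_pos.mpr (by linarith)), one_mul]
    exact Real.sqrt_le_sqrt (by linarith)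
  have hSsa : IsSelfAdjoint S := cfc_predicate _ _
  have hCsa : IsSelfAdjoint Cc := cfc_predicate _ _
  -- 1 - P facts
  have h1Pidem : (1 - P) * (1 - P) = 1 - P := hP.one_sub
  have h1Psa : IsSelfAdjoint (1 - P) := (IsSelfAdjoint.one (R := H →L[ℂ] H)).sub hPsa
  have h1Ppos : (0 : H →L[ℂ] H) ≤ 1 - P := by
    have := star_mul_self_nonneg (1 - P)
    rwa [h1Psa.star_eq, h1Pidem] at this
  -- M = W*W + l and its inverse N
  set M : H →L[ℂ] H := WW + (l : ℂ) • (1 : H →L[ℂ] H) with hMdef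
  set N := cfc (fun u : ℝ => (u + l)⁻¹) WW with hNdef
  have hWWne : ∀ x ∈ spectrum ℝ WW, x + l ≠ 0 := fun x hx =>
    ne_of_gt (by have := hWWspec x hx; linarith)
  have hcontN : ContinuousOn (fun u : ℝ => (u + l)⁻¹) (spectrum ℝ WW) :=
    ContinuousOn.inv₀ (by fun_prop) hWWne
  have hlsmul : ((l : ℂ) • (1 : H →L[ℂ] H)) = l • 1 := by
    rw [← algebraMap_smul ℂ l (1 : H →L[ℂ] H)]; norm_num
  have hMcfc : M = cfc (fun u : ℝ => u + l) WW := by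
    rw [cfc_add_const l (fun u : ℝ => u) WW (by fun_prop) hWWsa, cfc_id' ℝ WW,
      Algebra.algebraMap_eq_smul_one, hMdef, hlsmul]
  have hMN : M * N = 1 := by
    rw [hMcfc, hNdef, ← cfc_mul _ _ WW (by fun_prop) hcontN, ← cfc_one ℝ WW]
    exact cfc_congr fun x hx => by simp only [Pi.one_apply]; field_simp [hWWne x hx]
  have hNM : N * M = 1 := by
    rw [hMcfc, hNdef, ← cfc_mul _ _ WW hcontN (by fun_prop), ← cfc_one ℝ WW]
    exact cfc_congr fun x hx => by simp only [Pi.one_apply]; field_simp [hWWne x hx]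
  have hMunit : IsUnit M := ⟨⟨M, N, hMN, hNM⟩, rfl⟩
  have hNinv : Ring.inverse M = N := by
    have : Ring.inverse M * M = 1 := Ring.inverse_mul_cancel M hMunit
    calc Ring.inverse M = Ring.inverse M * (M * N) := by rw [hMN, mul_one]
      _ = (Ring.inverse M * M) * N := by rw [mul_assoc]
      _ = N := by rw [this, one_mul]
  -- D and Neumann bound
  set D := R * (T - WW) * R with hDdef
  have hc0 : 0 ≤ c := le_trans (norm_nonneg _) hnorm
  have hDnorm : ‖D‖ ≤ c := hnorm
  have hDlt : ‖D‖ < 1 := lt_of_le_of_lt hDnorm hc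
  have hunit1D : IsUnit (1 - D) := isUnit_one_sub_of_norm_lt_one hDlt
  have hRTlR : R * (T + l • 1) * R = 1 := by
    rw [← hQQ, show R * (Q * Q) * R = (R * Q) * (Q * R) by rw [mul_assoc, mul_assoc, mul_assoc],
      hRQ, hQR, one_mul]
  have h1D : 1 - D = R * M * R := by
    have hM' : M = (T + l • 1) - (T - WW) := by rw [hMdef, hlsmul]; abel
    have hsplit : R * M * R = R * (T + l • 1) * R - R * (T - WW) * R := by
      rw [hM', mul_sub, sub_mul]
    rw [hsplit, hRTlR, hDdef]
  have hQRz : ∀ z : H →L[ℂ] H, Q * (R * z) = z := fun z => by rw [← mul_assoc, hQR, one_mul]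
  have hNMz : ∀ z : H →L[ℂ] H, N * (M * z) = z := fun z => by rw [← mul_assoc, hNM, one_mul]
  have hQNQD : Q * N * Q * (1 - D) = 1 := by
    rw [h1D]
    simp only [mul_assoc]
    rw [hQRz, hNMz, hQR]
  have hE : Q * N * Q = Ring.inverse (1 - D) := by
    calc Q * N * Q = Q * N * Q * ((1 - D) * Ring.inverse (1 - D)) := by
          rw [Ring.mul_inverse_cancel _ hunit1D, mul_one]
      _ = (Q * N * Q * (1 - D)) * Ring.inverse (1 - D) := (mul_assoc _ _ _).symm
      _ = Ring.inverse (1 - D) := by rw [hQNQD, one_mul]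
  have hEnorm : ‖Q * N * Q‖ ≤ (1 - c)⁻¹ := by
    rw [hE, ← geom_series_eq_inverse D hDlt]
    have hb : ∀ n : ℕ, ‖D ^ n‖ ≤ c ^ n := by
      intro n
      cases n with
      | zero =>
        simpa using (show ‖(1 : H →L[ℂ] H)‖ ≤ 1 by
          simpa [ContinuousLinearMap.one_def] using norm_id_le (E := H))
      | succ m =>
        exact (norm_pow_le' D m.succ_pos).trans
          (pow_le_pow_left₀ (norm_nonneg D) hDnorm _)
    have hg : Summable (fun n : ℕ => c ^ n) := summable_geometric_of_lt_one hc0 hc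
    have hsumD : Summable (fun n : ℕ => ‖D ^ n‖) :=
      Summable.of_nonneg_of_le (fun n => norm_nonneg _) hb hg
    calc ‖∑' n : ℕ, D ^ n‖ ≤ ∑' n : ℕ, ‖D ^ n‖ := norm_tsum_le_tsum_norm hsumD
      _ ≤ ∑' n : ℕ, c ^ n := Summable.tsum_le_tsum hb hsumD hg
      _ = (1 - c)⁻¹ := tsum_geometric_of_lt_one hc0 hc
  -- main chain
  have hstep1 : ‖(1 - P) * S‖ ^ 2 = ‖S * (1 - P) * S‖ := by
    rw [sq, ← CStarRing.norm_star_mul_self]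
    congr 1
    rw [star_mul, hSsa.star_eq, h1Psa.star_eq]
    calc S * (1 - P) * ((1 - P) * S) = S * ((1 - P) * (1 - P)) * S := by
          simp only [mul_assoc]
      _ = S * (1 - P) * S := by rw [h1Pidem]
  have hle : (1 : H →L[ℂ] H) - P ≤ l • N := by
    have h := (nonneg_iff_isPositive _).mpr hproj
    rw [sub_nonneg] at h
    have hsmul : ((l : ℂ) • Ring.inverse ((adjoint W).comp W + (l : ℂ) • (1 : H →L[ℂ] H)))
        = l • N := by
      rw [← hWWdef, ← hMdef, hNinv, ← algebraMap_smul ℂ l N]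
      norm_num
    rwa [hsmul] at h
  have hconj : S * (1 - P) * S ≤ S * (l • N) * S := by
    have := star_left_conjugate_le_conjugate hle S
    rwa [hSsa.star_eq] at this
  have hpos : (0 : H →L[ℂ] H) ≤ S * (1 - P) * S := by
    have := star_left_conjugate_nonneg h1Ppos S
    rwa [hSsa.star_eq] at this
  have hnb : ‖S * (1 - P) * S‖ ≤ ‖S * (l • N) * S‖ :=
    CStarAlgebra.norm_le_norm_of_nonneg_of_le hpos hconj
  have hSNS : S * (l • N) * S = l • (Cc * (Q * N * Q) * Cc) := by
    have h1 : S * (l • N) * S = l • (S * N * S) := by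
      rw [mul_smul_comm, smul_mul_assoc]
    have h2 : S * N * S = Cc * (Q * N * Q) * Cc := by
      nth_rewrite 1 [← hCQ]
      rw [← hQC]
      simp only [mul_assoc]
    rw [h1, h2]
  have hfin : ‖S * (l • N) * S‖ ≤ l * (1 - c)⁻¹ := by
    rw [hSNS, norm_smul, Real.norm_of_nonneg hl.le]
    have h2 : ‖Cc * (Q * N * Q) * Cc‖ ≤ (1 - c)⁻¹ := by
      have hq0 : (0:ℝ) ≤ ‖Q * N * Q‖ := norm_nonneg _
      have hA : ‖Cc * (Q * N * Q)‖ ≤ ‖Q * N * Q‖ :=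
        (norm_mul_le _ _).trans (mul_le_of_le_one_left hq0 hCnorm)
      have hB : ‖Cc * (Q * N * Q) * Cc‖ ≤ ‖Q * N * Q‖ := by
        refine (norm_mul_le _ _).trans ?_
        calc ‖Cc * (Q * N * Q)‖ * ‖Cc‖ ≤ ‖Q * N * Q‖ * 1 :=
              mul_le_mul hA hCnorm (norm_nonneg _) hq0
          _ = ‖Q * N * Q‖ := mul_one _
      exact hB.trans hEnorm
    exact mul_le_mul_of_nonneg_left h2 hl.le
  calc ‖(1 - P) * S‖ ^ 2 = ‖S * (1 - P) * S‖ := hstep1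
    _ ≤ ‖S * (l • N) * S‖ := hnb
    _ ≤ l * (1 - c)⁻¹ := hfin
    _ = (1 - c)⁻¹ * l := mul_comm _ _
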